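/- arXiv:2009.09908 — 4 statements merged into one kernel-verified Lean document; each statement's English description precedes it below -/
import Mathlib

section
/- For every fixed z ∈ ℝ^n and every τ > 0, the full-coordinates oracle satisfies E[‖g_f(z,τ,ξ) − F(z)‖_q²] ≤ 3σ² + 3 n L₂² τ² + 12 n Δ²/τ², where the expectation is over ξ. -/
open MeasureTheory Real Finset
open scoped RealInnerProductSpace

noncomputable section

/-- `ℝ^n` with the Euclidean structure. -/
abbrev Esp (n : ℕ) := EuclideanSpace ℝ (Fin n)

/-- `ℝ^{n_x} × ℝ^{n_y}` with the Euclidean (ℓ₂-product) structure. -/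
abbrev Zsp (nx ny : ℕ) := WithLp 2 (Esp nx × Esp ny)

/-- Pairing `(x, y) ∈ ℝ^{n_x} × ℝ^{n_y} = ℝ^n`. -/
def mkZ {nx ny : ℕ} (x : Esp nx) (y : Esp ny) : Zsp nx ny := (WithLp.equiv 2 _).symm (x, y)

/-- The ℓ_q "norm" `(∑ i, |z_i|^q)^{1/q}` on `ℝ^n = ℝ^{n_x} × ℝ^{n_y}`. -/
def lqN (q : ℝ) {nx ny : ℕ} (z : Zsp nx ny) : ℝ :=
  ((∑ i, |z.fst i| ^ q) + ∑ j, |z.snd j| ^ q) ^ (1 / q)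

/-- The saddle-point operator `F(x,y) = (∇_x f(x,y), −∇_y f(x,y))`. -/
def sadOp {nx ny : ℕ} (f : Zsp nx ny → ℝ) (z : Zsp nx ny) : Zsp nx ny :=
  mkZ (gradient (fun x => f (mkZ x z.snd)) z.fst) (-(gradient (fun y => f (mkZ z.fst y)) z.snd))

/-- The full-coordinates zeroth-order oracle
`g_f(z,τ,ξ) = (1/τ) ∑_{i≤n_x} (f̃(z+τh_i,ξ) − f̃(z,ξ)) h_i
            + (1/τ) ∑_{i>n_x} (f̃(z,ξ) − f̃(z+τh_i,ξ)) h_i`,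
written componentwise in `ℝ^{n_x} × ℝ^{n_y}`. -/
def gfOr {nx ny : ℕ} {Ξ : Type*} (ftil : Zsp nx ny → Ξ → ℝ) (z : Zsp nx ny) (τ : ℝ)
    (ξv : Ξ) : Zsp nx ny :=
  mkZ (WithLp.toLp 2 (fun i => (ftil (mkZ (z.fst + τ • EuclideanSpace.single i 1) z.snd) ξv - ftil z ξv) / τ))
      (WithLp.toLp 2 (fun j => (ftil z ξv - ftil (mkZ z.fst (z.snd + τ • EuclideanSpace.single j 1)) ξv) / τ))

/-! ### Auxiliary lemmas -/

lemma normZ_sq {nx ny : ℕ} (w : Zsp nx ny) :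
    ‖w‖ ^ 2 = (∑ i, (w.fst i) ^ 2) + ∑ j, (w.snd j) ^ 2 := by
  rw [WithLp.prod_norm_sq_eq_of_L2, EuclideanSpace.norm_eq, EuclideanSpace.norm_eq,
    Real.sq_sqrt (by positivity), Real.sq_sqrt (by positivity)]
  simp [sq_abs]

lemma coord_le_norm_fst {nx ny : ℕ} (w : Zsp nx ny) (i : Fin nx) : |w.fst i| ≤ ‖w‖ := by
  rw [← Real.sqrt_sq (norm_nonneg w), ← Real.sqrt_sq_eq_abs]
  apply Real.sqrt_le_sqrt
  rw [normZ_sq]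
  have h1 : (w.fst i)^2 ≤ ∑ k, (w.fst k)^2 :=
    Finset.single_le_sum (f := fun k => (w.fst k)^2) (fun k _ => sq_nonneg _) (Finset.mem_univ i)
  have h2 : (0:ℝ) ≤ ∑ j, (w.snd j)^2 := by positivity
  linarith

lemma coord_le_norm_snd {nx ny : ℕ} (w : Zsp nx ny) (j : Fin ny) : |w.snd j| ≤ ‖w‖ := by
  rw [← Real.sqrt_sq (norm_nonneg w), ← Real.sqrt_sq_eq_abs]
  apply Real.sqrt_le_sqrt
  rw [normZ_sq]
  have h1 : (w.snd j)^2 ≤ ∑ k, (w.snd k)^2 :=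
    Finset.single_le_sum (f := fun k => (w.snd k)^2) (fun k _ => sq_nonneg _) (Finset.mem_univ j)
  have h2 : (0:ℝ) ≤ ∑ i, (w.fst i)^2 := by positivity
  linarith

lemma lqN_nonneg (q : ℝ) {nx ny : ℕ} (w : Zsp nx ny) : 0 ≤ lqN q w := by
  apply Real.rpow_nonneg
  have h1 : (0:ℝ) ≤ ∑ i, |w.fst i| ^ q :=
    Finset.sum_nonneg fun i _ => Real.rpow_nonneg (abs_nonneg _) _
  have h2 : (0:ℝ) ≤ ∑ j, |w.snd j| ^ q :=
    Finset.sum_nonneg fun j _ => Real.rpow_nonneg (abs_nonneg _) _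
  linarith

lemma lqN_le_norm {q : ℝ} (hq : 2 ≤ q) {nx ny : ℕ} (w : Zsp nx ny) : lqN q w ≤ ‖w‖ := by
  have hq0 : 0 < q := by linarith
  have key : ∀ a : ℝ, |a| ≤ ‖w‖ → |a| ^ q ≤ ‖w‖ ^ (q - 2) * a ^ 2 := by
    intro a ha
    rcases eq_or_ne a 0 with h | h
    · subst h
      rw [abs_zero, Real.zero_rpow (ne_of_gt hq0)]
      positivity
    · have hpos : 0 < |a| := abs_pos.mpr h
      have : |a| ^ q = |a| ^ (q - 2) * |a| ^ (2:ℝ) := by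
        rw [← Real.rpow_add hpos]; ring_nf
      rw [this]
      have h2 : |a| ^ ((2:ℝ)) = a ^ 2 := by
        rw [Real.rpow_two, sq_abs]
      rw [h2]
      apply mul_le_mul_of_nonneg_right _ (sq_nonneg a)
      exact Real.rpow_le_rpow (abs_nonneg a) ha (by linarith)
  have hsum : (∑ i, |w.fst i| ^ q) + ∑ j, |w.snd j| ^ q ≤ ‖w‖ ^ q := by
    calc (∑ i, |w.fst i| ^ q) + ∑ j, |w.snd j| ^ q
        ≤ (∑ i, ‖w‖ ^ (q-2) * (w.fst i) ^ 2) + ∑ j, ‖w‖ ^ (q-2) * (w.snd j) ^ 2 := by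
          gcongr with i _ j _
          · exact key _ (coord_le_norm_fst w i)
          · exact key _ (coord_le_norm_snd w j)
      _ = ‖w‖ ^ (q-2) * (((∑ i, (w.fst i) ^ 2) + ∑ j, (w.snd j) ^ 2)) := by
          rw [← Finset.mul_sum, ← Finset.mul_sum]; ring
      _ = ‖w‖ ^ (q-2) * ‖w‖ ^ 2 := by rw [normZ_sq]
      _ = ‖w‖ ^ q := by
          rw [← Real.rpow_two, ← Real.rpow_add' (norm_nonneg w)]
          · ring_nf
          · ring_nf; linarith
  have h0 : (0:ℝ) ≤ (∑ i, |w.fst i| ^ q) + ∑ j, |w.snd j| ^ q := by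
    have h1 : (0:ℝ) ≤ ∑ i, |w.fst i| ^ q :=
      Finset.sum_nonneg fun i _ => Real.rpow_nonneg (abs_nonneg _) _
    have h2 : (0:ℝ) ≤ ∑ j, |w.snd j| ^ q :=
      Finset.sum_nonneg fun j _ => Real.rpow_nonneg (abs_nonneg _) _
    linarith
  calc lqN q w ≤ (‖w‖ ^ q) ^ (1/q) := Real.rpow_le_rpow h0 hsum (by positivity)
    _ = ‖w‖ := by
        rw [← Real.rpow_mul (norm_nonneg w), mul_one_div, div_self (ne_of_gt hq0),
          Real.rpow_one]

lemma normZ_sq_le {nx ny : ℕ} (w : Zsp nx ny) {C : ℝ}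
    (h1 : ∀ i, |w.fst i| ≤ C) (h2 : ∀ j, |w.snd j| ≤ C) :
    ‖w‖ ^ 2 ≤ (nx + ny : ℝ) * C ^ 2 := by
  rcases Nat.eq_zero_or_pos (nx + ny) with hzero | hpos
  · obtain ⟨hx0, hy0⟩ : nx = 0 ∧ ny = 0 := by omega
    subst hx0; subst hy0
    rw [normZ_sq]
    simp
  have hC : 0 ≤ C := by
    rcases Nat.eq_zero_or_pos nx with h | h
    · exact le_trans (abs_nonneg _) (h2 ⟨0, by omega⟩)
    · exact le_trans (abs_nonneg _) (h1 ⟨0, h⟩)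
  rw [normZ_sq]
  have e1 : ∑ i, (w.fst i)^2 ≤ (nx : ℝ) * C^2 := by
    calc ∑ i, (w.fst i)^2 ≤ ∑ _i : Fin nx, C^2 := by
          apply Finset.sum_le_sum
          intro i _
          rw [← sq_abs]
          exact pow_le_pow_left₀ (abs_nonneg _) (h1 i) 2
      _ = (nx : ℝ) * C^2 := by simp [Finset.sum_const, nsmul_eq_mul]
  have e2 : ∑ j, (w.snd j)^2 ≤ (ny : ℝ) * C^2 := by
    calc ∑ j, (w.snd j)^2 ≤ ∑ _j : Fin ny, C^2 := by
          apply Finset.sum_le_sum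
          intro j _
          rw [← sq_abs]
          exact pow_le_pow_left₀ (abs_nonneg _) (h2 j) 2
      _ = (ny : ℝ) * C^2 := by simp [Finset.sum_const, nsmul_eq_mul]
  push_cast
  linarith

lemma gradient_apply_eq {n : ℕ} (g : Esp n → ℝ) (a : Esp n) (i : Fin n) :
    gradient g a i = fderiv ℝ g a (EuclideanSpace.single i 1) := by
  have h : gradient g a i = ⟪gradient g a, EuclideanSpace.single i (1:ℝ)⟫ := by
    rw [EuclideanSpace.inner_single_right]; simp
  rw [h, gradient, InnerProductSpace.toDual_symm_apply]

def inX (nx ny : ℕ) : Esp nx →L[ℝ] Zsp nx ny :=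
  ((WithLp.prodContinuousLinearEquiv 2 ℝ (Esp nx) (Esp ny)).symm :
      (Esp nx × Esp ny) →L[ℝ] Zsp nx ny).comp (ContinuousLinearMap.inl ℝ (Esp nx) (Esp ny))

def inY (nx ny : ℕ) : Esp ny →L[ℝ] Zsp nx ny :=
  ((WithLp.prodContinuousLinearEquiv 2 ℝ (Esp nx) (Esp ny)).symm :
      (Esp nx × Esp ny) →L[ℝ] Zsp nx ny).comp (ContinuousLinearMap.inr ℝ (Esp nx) (Esp ny))

lemma hasFDerivAt_mkZ_left {nx ny : ℕ} (c : Esp ny) (a : Esp nx) :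
    HasFDerivAt (fun x => mkZ x c) (inX nx ny) a := by
  have h1 : HasFDerivAt (fun x : Esp nx => (x, c))
      (ContinuousLinearMap.inl ℝ (Esp nx) (Esp ny)) a := hasFDerivAt_prodMk_left a c
  exact ((WithLp.prodContinuousLinearEquiv 2 ℝ (Esp nx) (Esp ny)).symm.hasFDerivAt).comp a h1

lemma hasFDerivAt_mkZ_right {nx ny : ℕ} (c : Esp nx) (a : Esp ny) :
    HasFDerivAt (fun y => mkZ c y) (inY nx ny) a := by
  have h1 : HasFDerivAt (fun y : Esp ny => (c, y))
      (ContinuousLinearMap.inr ℝ (Esp nx) (Esp ny)) a := hasFDerivAt_prodMk_right c a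
  exact ((WithLp.prodContinuousLinearEquiv 2 ℝ (Esp nx) (Esp ny)).symm.hasFDerivAt).comp a h1

lemma sadOp_fst {nx ny : ℕ} (φ : Zsp nx ny → ℝ) (hφ : Differentiable ℝ φ) (w : Zsp nx ny)
    (i : Fin nx) :
    (sadOp φ w).fst i = fderiv ℝ φ w (mkZ (EuclideanSpace.single i 1) 0) := by
  have hcomp : HasFDerivAt (fun x => φ (mkZ x w.snd))
      ((fderiv ℝ φ w).comp (inX nx ny)) w.fst :=
    ((hφ w).hasFDerivAt).comp w.fst (hasFDerivAt_mkZ_left w.snd w.fst)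
  show gradient (fun x => φ (mkZ x w.snd)) w.fst i = _
  rw [gradient_apply_eq, hcomp.fderiv]
  rfl

lemma sadOp_snd {nx ny : ℕ} (φ : Zsp nx ny → ℝ) (hφ : Differentiable ℝ φ) (w : Zsp nx ny)
    (j : Fin ny) :
    (sadOp φ w).snd j = -(fderiv ℝ φ w (mkZ 0 (EuclideanSpace.single j 1))) := by
  have hcomp : HasFDerivAt (fun y => φ (mkZ w.fst y))
      ((fderiv ℝ φ w).comp (inY nx ny)) w.snd :=
    ((hφ w).hasFDerivAt).comp w.snd (hasFDerivAt_mkZ_right w.fst w.snd)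
  show -(gradient (fun y => φ (mkZ w.fst y)) w.snd) j = _
  show -(gradient (fun y => φ (mkZ w.fst y)) w.snd j) = _
  rw [gradient_apply_eq, hcomp.fderiv]
  rfl

lemma diffq {E : Type*} [NormedAddCommGroup E] [NormedSpace ℝ E]
    (φ : E → ℝ) (hφ : Differentiable ℝ φ) (z u : E) {K τ : ℝ} (hτ : 0 < τ)
    (hK : ∀ t ∈ Set.Icc (0:ℝ) τ, |fderiv ℝ φ (z + t • u) u - fderiv ℝ φ z u| ≤ K) :
    |(φ (z + τ • u) - φ z) / τ - fderiv ℝ φ z u| ≤ K := by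
  set D := fderiv ℝ φ z u with hD
  have hder : ∀ t : ℝ, HasDerivAt (fun s : ℝ => φ (z + s • u) - s * D)
      (fderiv ℝ φ (z + t • u) u - D) t := by
    intro t
    have h1 : HasDerivAt (fun s : ℝ => z + s • u) u t := by
      simpa using ((hasDerivAt_id t).smul_const u).const_add z
    have h2 : HasDerivAt (fun s : ℝ => φ (z + s • u)) (fderiv ℝ φ (z + t • u) u) t := by
      exact ((hφ (z + t • u)).hasFDerivAt).comp_hasDerivAt t h1
    exact h2.sub (by simpa using (hasDerivAt_id t).mul_const D)
  have hmvt := Convex.norm_image_sub_le_of_norm_hasDerivWithin_le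
    (f := fun s : ℝ => φ (z + s • u) - s * D)
    (f' := fun t => fderiv ℝ φ (z + t • u) u - D)
    (fun t ht => (hder t).hasDerivWithinAt)
    (fun t ht => by rw [Real.norm_eq_abs]; exact hK t ht)
    (convex_Icc 0 τ) (Set.left_mem_Icc.2 (le_of_lt hτ)) (Set.right_mem_Icc.2 (le_of_lt hτ))
  simp only [Real.norm_eq_abs, zero_smul, add_zero, zero_mul, sub_zero, sub_sub_cancel] at hmvt
  have heq : (φ (z + τ • u) - φ z) / τ - D = (φ (z + τ • u) - τ * D - φ z) / τ := by
    field_simp; ring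
  rw [heq, abs_div, abs_of_pos hτ, div_le_iff₀ hτ]
  calc |φ (z + τ • u) - τ * D - φ z| ≤ K * |τ| := hmvt
    _ = K * τ := by rw [abs_of_pos hτ]

lemma mkZ_add_left {nx ny : ℕ} (z : Zsp nx ny) (c : ℝ) (e : Esp nx) :
    mkZ (z.fst + c • e) z.snd = z + c • mkZ e 0 := by
  show WithLp.toLp 2 (z.fst + c • e, z.snd) = WithLp.toLp 2 (z.fst + c • e, z.snd + c • (0 : Esp ny))
  simp

lemma mkZ_add_right {nx ny : ℕ} (z : Zsp nx ny) (c : ℝ) (e : Esp ny) :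
    mkZ z.fst (z.snd + c • e) = z + c • mkZ 0 e := by
  show WithLp.toLp 2 (z.fst, z.snd + c • e) = WithLp.toLp 2 (z.fst + c • (0 : Esp nx), z.snd + c • e)
  simp

lemma norm_mkZ_single_left {nx ny : ℕ} (i : Fin nx) :
    ‖mkZ (EuclideanSpace.single i (1:ℝ)) (0 : Esp ny)‖ = 1 := by
  have h2 : ‖mkZ (EuclideanSpace.single i (1:ℝ)) (0 : Esp ny)‖ ^ 2 = 1 := by
    rw [WithLp.prod_norm_sq_eq_of_L2]
    show ‖EuclideanSpace.single i (1:ℝ)‖ ^ 2 + ‖(0 : Esp ny)‖ ^ 2 = 1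
    simp
  rw [← Real.sqrt_sq (norm_nonneg _), h2, Real.sqrt_one]

lemma norm_mkZ_single_right {nx ny : ℕ} (j : Fin ny) :
    ‖mkZ (0 : Esp nx) (EuclideanSpace.single j (1:ℝ))‖ = 1 := by
  have h2 : ‖mkZ (0 : Esp nx) (EuclideanSpace.single j (1:ℝ))‖ ^ 2 = 1 := by
    rw [WithLp.prod_norm_sq_eq_of_L2]
    show ‖(0 : Esp nx)‖ ^ 2 + ‖EuclideanSpace.single j (1:ℝ)‖ ^ 2 = 1
    simp
  rw [← Real.sqrt_sq (norm_nonneg _), h2, Real.sqrt_one]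

set_option maxHeartbeats 1000000 in
/-- Second-moment bound for the full-coordinates oracle:
`E[‖g_f(z,τ,ξ) − F(z)‖_q²] ≤ 3σ² + 3 n L₂² τ² + 12 n Δ²/τ²`. -/
theorem full_coordinates_second_moment {nx ny : ℕ} (hnx : 1 ≤ nx) (hny : 1 ≤ ny)
    (q : ℝ) (hq : 2 ≤ q)
    {Ω : Type*} [MeasurableSpace Ω] (μ : Measure Ω) [IsProbabilityMeasure μ]
    (fsto : Zsp nx ny → Ω → ℝ) (hfsto : ∀ ω, Differentiable ℝ (fun z => fsto z ω))
    (fdet : Zsp nx ny → ℝ) (hfdet : Differentiable ℝ fdet)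
    (σ Δ L₂ : ℝ) (δ : Zsp nx ny → ℝ) (hδ : ∀ z, |δ z| ≤ Δ)
    (hunb : ∀ z, ∫ ω, (sadOp (fun z' => fsto z' ω) z) ∂μ = sadOp fdet z)
    (hvarInt : ∀ z, Integrable (fun ω => ‖sadOp (fun z' => fsto z' ω) z - sadOp fdet z‖ ^ 2) μ)
    (hvar : ∀ z, ∫ ω, ‖sadOp (fun z' => fsto z' ω) z - sadOp fdet z‖ ^ 2 ∂μ ≤ σ ^ 2)
    (Lξ : Ω → ℝ)
    (hLip : ∀ ω z1 z2, ‖sadOp (fun z' => fsto z' ω) z1 - sadOp (fun z' => fsto z' ω) z2‖ ≤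
      Lξ ω * ‖z1 - z2‖)
    (hL2Int : Integrable (fun ω => Lξ ω ^ 2) μ)
    (hL2 : ∫ ω, Lξ ω ^ 2 ∂μ ≤ L₂ ^ 2)
    (z : Zsp nx ny) (τ : ℝ) (hτ : 0 < τ)
    (hmomInt : Integrable
      (fun ω => lqN q (gfOr (fun z' ω' => fsto z' ω' + δ z') z τ ω - sadOp fdet z) ^ 2) μ) :
    ∫ ω, lqN q (gfOr (fun z' ω' => fsto z' ω' + δ z') z τ ω - sadOp fdet z) ^ 2 ∂μ ≤
      3 * σ ^ 2 + 3 * (nx + ny : ℝ) * L₂ ^ 2 * τ ^ 2 +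
        12 * (nx + ny : ℝ) * Δ ^ 2 / τ ^ 2 := by
  set n : ℝ := (nx + ny : ℝ) with hn
  have hn0 : (0:ℝ) ≤ n := by positivity
  clear_value n
  have hΔ : 0 ≤ Δ := le_trans (abs_nonneg _) (hδ z)
  -- nonnegativity of Lξ
  have hL0 : ∀ ω, 0 ≤ Lξ ω := by
    intro ω
    have i0 : Fin nx := ⟨0, hnx⟩
    set u := mkZ (EuclideanSpace.single i0 (1:ℝ)) (0 : Esp ny) with hu
    have hnu : ‖u‖ = 1 := norm_mkZ_single_left i0
    have := hLip ω (z + u) z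
    rw [add_sub_cancel_left, hnu, mul_one] at this
    exact le_trans (norm_nonneg _) this
  -- pointwise bound
  have hpt : ∀ ω,
      lqN q (gfOr (fun z' ω' => fsto z' ω' + δ z') z τ ω - sadOp fdet z) ^ 2 ≤
        3 * ‖sadOp (fun z' => fsto z' ω) z - sadOp fdet z‖ ^ 2 +
          3 * n * τ ^ 2 * Lξ ω ^ 2 + 12 * n * Δ ^ 2 / τ ^ 2 := by
    intro ω
    set φ : Zsp nx ny → ℝ := fun z' => fsto z' ω with hφdef
    have hφ : Differentiable ℝ φ := hfsto ω
    set G := gfOr (fun z' ω' => fsto z' ω' + δ z') z τ ω with hG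
    set Gs := gfOr (fun z' (_ : Ω) => fsto z' ω) z τ ω with hGs
    set S := sadOp φ z with hS
    set F := sadOp fdet z with hF
    -- bound on C := G - Gs
    have hCf : ∀ i, |(G - Gs).fst i| ≤ 2 * Δ / τ := by
      intro i
      have e : (G - Gs).fst i =
          (δ (mkZ (z.fst + τ • EuclideanSpace.single i 1) z.snd) - δ z) / τ := by
        show ((fsto (mkZ (z.fst + τ • EuclideanSpace.single i 1) z.snd) ω +
            δ (mkZ (z.fst + τ • EuclideanSpace.single i 1) z.snd)) - (fsto z ω + δ z)) / τ -
            (fsto (mkZ (z.fst + τ • EuclideanSpace.single i 1) z.snd) ω - fsto z ω) / τ = _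
        ring
      rw [e, abs_div, abs_of_pos hτ]
      gcongr
      calc |δ _ - δ z| ≤ |δ _| + |δ z| := abs_sub _ _
        _ ≤ Δ + Δ := add_le_add (hδ _) (hδ _)
        _ = 2 * Δ := by ring
    have hCs : ∀ j, |(G - Gs).snd j| ≤ 2 * Δ / τ := by
      intro j
      have e : (G - Gs).snd j =
          (δ z - δ (mkZ z.fst (z.snd + τ • EuclideanSpace.single j 1))) / τ := by
        show ((fsto z ω + δ z) - (fsto (mkZ z.fst (z.snd + τ • EuclideanSpace.single j 1)) ω +
            δ (mkZ z.fst (z.snd + τ • EuclideanSpace.single j 1)))) / τ -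
            (fsto z ω - fsto (mkZ z.fst (z.snd + τ • EuclideanSpace.single j 1)) ω) / τ = _
        ring
      rw [e, abs_div, abs_of_pos hτ]
      gcongr
      calc |δ z - δ _| ≤ |δ z| + |δ _| := abs_sub _ _
        _ ≤ Δ + Δ := add_le_add (hδ _) (hδ _)
        _ = 2 * Δ := by ring
    have hCnorm : ‖G - Gs‖ ^ 2 ≤ n * (2 * Δ / τ) ^ 2 := by rw [hn]; exact normZ_sq_le _ hCf hCs
    -- bound on B := Gs - S
    have hder_bound : ∀ (u : Zsp nx ny), ‖u‖ = 1 → ∀ t ∈ Set.Icc (0:ℝ) τ,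
        ‖sadOp φ (z + t • u) - sadOp φ z‖ ≤ Lξ ω * τ := by
      intro u hnu t ht
      calc ‖sadOp φ (z + t • u) - sadOp φ z‖ ≤ Lξ ω * ‖(z + t • u) - z‖ := hLip ω _ _
        _ = Lξ ω * t := by
            rw [add_sub_cancel_left, norm_smul, hnu, mul_one, Real.norm_eq_abs,
              abs_of_nonneg ht.1]
        _ ≤ Lξ ω * τ := mul_le_mul_of_nonneg_left ht.2 (hL0 ω)
    have hBf : ∀ i, |(Gs - S).fst i| ≤ Lξ ω * τ := by
      intro i
      set u := mkZ (EuclideanSpace.single i (1:ℝ)) (0 : Esp ny) with hu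
      have hnu : ‖u‖ = 1 := norm_mkZ_single_left i
      have e : (Gs - S).fst i = (φ (z + τ • u) - φ z) / τ - fderiv ℝ φ z u := by
        have e1 : (Gs - S).fst i = (φ (mkZ (z.fst + τ • EuclideanSpace.single i 1) z.snd) -
            φ z) / τ - (sadOp φ z).fst i := rfl
        rw [e1, sadOp_fst φ hφ z i, mkZ_add_left]
      rw [e]
      apply diffq φ hφ z u hτ
      intro t ht
      have e2 : fderiv ℝ φ (z + t • u) u - fderiv ℝ φ z u =
          (sadOp φ (z + t • u) - sadOp φ z).fst i := by
        show _ = (sadOp φ (z + t • u)).fst i - (sadOp φ z).fst i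
        rw [sadOp_fst φ hφ _ i, sadOp_fst φ hφ z i]
      rw [e2]
      exact le_trans (coord_le_norm_fst _ i) (hder_bound u hnu t ht)
    have hBs : ∀ j, |(Gs - S).snd j| ≤ Lξ ω * τ := by
      intro j
      set u := mkZ (0 : Esp nx) (EuclideanSpace.single j (1:ℝ)) with hu
      have hnu : ‖u‖ = 1 := norm_mkZ_single_right j
      have e : (Gs - S).snd j = -((φ (z + τ • u) - φ z) / τ - fderiv ℝ φ z u) := by
        have e1 : (Gs - S).snd j = (φ z - φ (mkZ z.fst (z.snd + τ • EuclideanSpace.single j 1)))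
            / τ - (sadOp φ z).snd j := rfl
        rw [e1, sadOp_snd φ hφ z j, mkZ_add_right]
        ring
      rw [e, abs_neg]
      apply diffq φ hφ z u hτ
      intro t ht
      have e2 : fderiv ℝ φ (z + t • u) u - fderiv ℝ φ z u =
          -((sadOp φ (z + t • u) - sadOp φ z).snd j) := by
        show _ = -((sadOp φ (z + t • u)).snd j - (sadOp φ z).snd j)
        rw [sadOp_snd φ hφ _ j, sadOp_snd φ hφ z j]
        ring
      rw [e2, abs_neg]
      exact le_trans (coord_le_norm_snd _ j) (hder_bound u hnu t ht)
    have hBnorm : ‖Gs - S‖ ^ 2 ≤ n * (Lξ ω * τ) ^ 2 := by rw [hn]; exact normZ_sq_le _ hBf hBs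
    -- triangle
    clear_value G Gs S F
    have htri : ‖G - F‖ ≤ ‖S - F‖ + ‖Gs - S‖ + ‖G - Gs‖ := by
      have : G - F = (G - Gs) + (Gs - S) + (S - F) := by abel
      rw [this]
      calc ‖(G - Gs) + (Gs - S) + (S - F)‖ ≤ ‖(G - Gs) + (Gs - S)‖ + ‖S - F‖ := norm_add_le _ _
        _ ≤ ‖G - Gs‖ + ‖Gs - S‖ + ‖S - F‖ := by
            have := norm_add_le (G - Gs) (Gs - S)
            linarith
        _ = ‖S - F‖ + ‖Gs - S‖ + ‖G - Gs‖ := by ring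
    have hlq : lqN q (G - F) ≤ ‖G - F‖ := lqN_le_norm hq _
    have hlq0 : 0 ≤ lqN q (G - F) := lqN_nonneg q _
    have key : lqN q (G - F) ^ 2 ≤
        3 * ‖S - F‖ ^ 2 + 3 * n * τ ^ 2 * Lξ ω ^ 2 + 12 * n * Δ ^ 2 / τ ^ 2 := by
      have h1 : lqN q (G - F) ^ 2 ≤ (‖S - F‖ + ‖Gs - S‖ + ‖G - Gs‖) ^ 2 := by
        have := le_trans hlq htri
        nlinarith [norm_nonneg (S - F), norm_nonneg (Gs - S), norm_nonneg (G - Gs)]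
      have h2 : (‖S - F‖ + ‖Gs - S‖ + ‖G - Gs‖) ^ 2 ≤
          3 * ‖S - F‖ ^ 2 + 3 * ‖Gs - S‖ ^ 2 + 3 * ‖G - Gs‖ ^ 2 := by
        nlinarith [sq_nonneg (‖S - F‖ - ‖Gs - S‖), sq_nonneg (‖S - F‖ - ‖G - Gs‖),
          sq_nonneg (‖Gs - S‖ - ‖G - Gs‖)]
      have h3 : n * (Lξ ω * τ) ^ 2 = n * τ ^ 2 * Lξ ω ^ 2 := by ring
      have h4 : n * (2 * Δ / τ) ^ 2 = 4 * n * Δ ^ 2 / τ ^ 2 := by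
        field_simp; ring
      rw [h3] at hBnorm
      rw [h4] at hCnorm
      have h5 : (12:ℝ) * n * Δ ^ 2 / τ ^ 2 = 3 * (4 * n * Δ ^ 2 / τ ^ 2) := by ring
      rw [h5]
      linarith
    exact key
  -- integration
  have hInt1 : Integrable (fun ω =>
      3 * ‖sadOp (fun z' => fsto z' ω) z - sadOp fdet z‖ ^ 2) μ := (hvarInt z).const_mul 3
  have hInt2 : Integrable (fun ω => 3 * n * τ ^ 2 * Lξ ω ^ 2) μ :=
    hL2Int.const_mul (3 * n * τ ^ 2)
  have hInt3 : Integrable (fun _ : Ω => 12 * n * Δ ^ 2 / τ ^ 2) μ := integrable_const _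
  have step1 : ∫ ω, lqN q (gfOr (fun z' ω' => fsto z' ω' + δ z') z τ ω - sadOp fdet z) ^ 2 ∂μ ≤
      ∫ ω, (3 * ‖sadOp (fun z' => fsto z' ω) z - sadOp fdet z‖ ^ 2 +
        3 * n * τ ^ 2 * Lξ ω ^ 2 + 12 * n * Δ ^ 2 / τ ^ 2) ∂μ :=
    integral_mono hmomInt ((hInt1.add hInt2).add hInt3) hpt
  have hInt12 : Integrable (fun ω => 3 * ‖sadOp (fun z' => fsto z' ω) z - sadOp fdet z‖ ^ 2 +
      3 * n * τ ^ 2 * Lξ ω ^ 2) μ := hInt1.add hInt2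
  have eA : ∫ ω, (3 * ‖sadOp (fun z' => fsto z' ω) z - sadOp fdet z‖ ^ 2 +
        3 * n * τ ^ 2 * Lξ ω ^ 2 + 12 * n * Δ ^ 2 / τ ^ 2) ∂μ =
      (∫ ω, (3 * ‖sadOp (fun z' => fsto z' ω) z - sadOp fdet z‖ ^ 2 +
        3 * n * τ ^ 2 * Lξ ω ^ 2) ∂μ) + ∫ _ω, (12 * n * Δ ^ 2 / τ ^ 2) ∂μ :=
    integral_add hInt12 hInt3
  have eB : ∫ ω, (3 * ‖sadOp (fun z' => fsto z' ω) z - sadOp fdet z‖ ^ 2 +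
        3 * n * τ ^ 2 * Lξ ω ^ 2) ∂μ =
      (∫ ω, 3 * ‖sadOp (fun z' => fsto z' ω) z - sadOp fdet z‖ ^ 2 ∂μ) +
        ∫ ω, 3 * n * τ ^ 2 * Lξ ω ^ 2 ∂μ := integral_add hInt1 hInt2
  have eC : ∫ ω, 3 * ‖sadOp (fun z' => fsto z' ω) z - sadOp fdet z‖ ^ 2 ∂μ =
      3 * ∫ ω, ‖sadOp (fun z' => fsto z' ω) z - sadOp fdet z‖ ^ 2 ∂μ := integral_const_mul _ _
  have eD : ∫ ω, 3 * n * τ ^ 2 * Lξ ω ^ 2 ∂μ =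
      3 * n * τ ^ 2 * ∫ ω, Lξ ω ^ 2 ∂μ := integral_const_mul _ _
  have eE : ∫ _ω : Ω, (12 * n * Δ ^ 2 / τ ^ 2) ∂μ = 12 * n * Δ ^ 2 / τ ^ 2 := by simp
  have step2 : ∫ ω, (3 * ‖sadOp (fun z' => fsto z' ω) z - sadOp fdet z‖ ^ 2 +
        3 * n * τ ^ 2 * Lξ ω ^ 2 + 12 * n * Δ ^ 2 / τ ^ 2) ∂μ =
      3 * (∫ ω, ‖sadOp (fun z' => fsto z' ω) z - sadOp fdet z‖ ^ 2 ∂μ) +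
        3 * n * τ ^ 2 * (∫ ω, Lξ ω ^ 2 ∂μ) + 12 * n * Δ ^ 2 / τ ^ 2 := by
    rw [eA, eB, eC, eD, eE]
  have b1 : 3 * (∫ ω, ‖sadOp (fun z' => fsto z' ω) z - sadOp fdet z‖ ^ 2 ∂μ) ≤ 3 * σ ^ 2 := by
    linarith [hvar z]
  have b2 : 3 * n * τ ^ 2 * (∫ ω, Lξ ω ^ 2 ∂μ) ≤ 3 * n * τ ^ 2 * L₂ ^ 2 := by
    apply mul_le_mul_of_nonneg_left hL2
    positivity
  have key : 3 * n * τ ^ 2 * L₂ ^ 2 = 3 * n * L₂ ^ 2 * τ ^ 2 := by ring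
  calc ∫ ω, lqN q (gfOr (fun z' ω' => fsto z' ω' + δ z') z τ ω - sadOp fdet z) ^ 2 ∂μ
      ≤ ∫ ω, (3 * ‖sadOp (fun z' => fsto z' ω) z - sadOp fdet z‖ ^ 2 +
          3 * n * τ ^ 2 * Lξ ω ^ 2 + 12 * n * Δ ^ 2 / τ ^ 2) ∂μ := step1
    _ = 3 * (∫ ω, ‖sadOp (fun z' => fsto z' ω) z - sadOp fdet z‖ ^ 2 ∂μ) +
        3 * n * τ ^ 2 * (∫ ω, Lξ ω ^ 2 ∂μ) + 12 * n * Δ ^ 2 / τ ^ 2 := step2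
    _ ≤ 3 * σ ^ 2 + 3 * n * L₂ ^ 2 * τ ^ 2 + 12 * n * Δ ^ 2 / τ ^ 2 := by linarith
end
end

section
/- Let z ∈ Z, g ∈ ℝ^n, and z_1 = prox_z(g). Then for all u ∈ Z: ⟨g, z − u⟩ ≤ V(z, u) − V(z_1, u) + (1/2)‖g‖_q². -/
open MeasureTheory Real
open scoped RealInnerProductSpace

noncomputable section

/-- The ℓ_r "norm" `(∑ i, |x i|^r)^(1/r)` on `ℝ^n`, for a real exponent `r`. -/
def lrNorm {n : ℕ} (r : ℝ) (x : EuclideanSpace ℝ (Fin n)) : ℝ := (∑ i, |x i| ^ r) ^ (1 / r)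

set_option maxHeartbeats 1000000


lemma aux_line_deriv {n : ℕ} {d : EuclideanSpace ℝ (Fin n) → ℝ} {D : EuclideanSpace ℝ (Fin n)}
    (x v : EuclideanSpace ℝ (Fin n)) (hd : HasGradientAt d D x) :
    HasDerivAt (fun t : ℝ => d (x + t • v)) ⟪D, v⟫ 0 := by
  have hf := hd.hasFDerivAt
  have hline : HasDerivAt (fun t : ℝ => x + t • v) v 0 := by
    simpa using ((hasDerivAt_id (0:ℝ)).smul_const v).const_add x
  have hf0 : HasFDerivAt d ((InnerProductSpace.toDual ℝ (EuclideanSpace ℝ (Fin n))) D)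
      ((fun t : ℝ => x + t • v) 0) := by simpa using hf
  have := hf0.comp_hasDerivAt (0:ℝ) hline
  exact this

lemma aux_slope_le {φ ψ : ℝ → ℝ} {c L : ℝ} (hφ : HasDerivAt φ c 0)
    (hψ : Filter.Tendsto ψ (nhdsWithin 0 (Set.Ioi 0)) (nhds L))
    (h : ∀ t ∈ Set.Ioc (0:ℝ) 1, (φ t - φ 0) / t ≤ ψ t) : c ≤ L := by
  have hs : Filter.Tendsto (fun t => (φ t - φ 0) / t) (nhdsWithin 0 (Set.Ioi 0)) (nhds c) := by
    have := hasDerivAt_iff_tendsto_slope.mp hφ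
    refine (this.mono_left (nhdsWithin_mono _ ?_)).congr (fun t => ?_)
    · intro t ht; exact ne_of_gt ht
    · simp [slope_def_field, div_eq_inv_mul]
  have hev : ∀ᶠ t in nhdsWithin 0 (Set.Ioi 0), (φ t - φ 0) / t ≤ ψ t := by
    filter_upwards [eventually_mem_nhdsWithin,
      eventually_nhdsWithin_of_eventually_nhds (eventually_le_nhds (show (0:ℝ) < 1 by norm_num))] with t ht ht1
    exact h t ⟨ht, ht1⟩
  exact le_of_tendsto_of_tendsto hs hψ hev

/-- Let `Z ⊆ ℝ^n` be closed convex, `p ∈ [1,2]`, `q ∈ [2,∞)` with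
`1/p + 1/q = 1`.  Let `d : ℝ^n → ℝ` be differentiable and 1-strongly convex w.r.t. `‖·‖_p`
on `Z`, with Bregman divergence `V(z,w) = d(w) − d(z) − ⟨∇d(z), w − z⟩`, and for `z ∈ Z`,
`g ∈ ℝ^n` let `z₁ = prox_z(g)` be a minimizer over `u ∈ Z` of `V(z,u) + ⟨g,u⟩`.
Then for all `u ∈ Z`: `⟨g, z − u⟩ ≤ V(z,u) − V(z₁,u) + (1/2)‖g‖_q²`. -/
theorem prox_descent_lemma {n : ℕ} (hn : 1 ≤ n) (Z : Set (EuclideanSpace ℝ (Fin n)))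
    (hZclosed : IsClosed Z) (hZconvex : Convex ℝ Z)
    (p q : ℝ) (hp : 1 ≤ p) (hp2 : p ≤ 2) (hq : 2 ≤ q) (hpq : 1 / p + 1 / q = 1)
    (d : EuclideanSpace ℝ (Fin n) → ℝ) (d' : EuclideanSpace ℝ (Fin n) → EuclideanSpace ℝ (Fin n))
    (hd : ∀ x, HasGradientAt d (d' x) x)
    (hdsc : ∀ z1 ∈ Z, ∀ z2 ∈ Z, ∀ t : ℝ, t ∈ Set.Icc (0 : ℝ) 1 →
      d (t • z1 + (1 - t) • z2) ≤
        t * d z1 + (1 - t) * d z2 - t * (1 - t) / 2 * lrNorm p (z1 - z2) ^ 2)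
    (V : EuclideanSpace ℝ (Fin n) → EuclideanSpace ℝ (Fin n) → ℝ)
    (hV : ∀ z w, V z w = d w - d z - ⟪d' z, w - z⟫)
    (z : EuclideanSpace ℝ (Fin n)) (hz : z ∈ Z) (g : EuclideanSpace ℝ (Fin n))
    (z1 : EuclideanSpace ℝ (Fin n)) (hz1Z : z1 ∈ Z)
    (hz1 : ∀ u ∈ Z, V z z1 + ⟪g, z1⟫ ≤ V z u + ⟪g, u⟫) :
    ∀ u ∈ Z, ⟪g, z - u⟫ ≤ V z u - V z1 u + 1 / 2 * lrNorm q g ^ 2 := by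
  intro u hu
  -- strong convexity lower bound
  have hlow : ∀ w ∈ Z, ∀ x ∈ Z, ⟪d' x, w - x⟫ ≤ d w - d x - 1/2 * lrNorm p (w - x) ^ 2 := by
    intro w hw x hx
    set K := lrNorm p (w - x) ^ 2 with hK
    have hφ := aux_line_deriv x (w - x) (hd x)
    refine aux_slope_le hφ (ψ := fun t => d w - d x - (1 - t)/2 * K) ?_ ?_
    · have : Filter.Tendsto (fun t : ℝ => d w - d x - (1 - t)/2 * K) (nhds 0)
          (nhds (d w - d x - (1 - 0)/2 * K)) := Continuous.tendsto (by continuity) 0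
      simpa using this.mono_left nhdsWithin_le_nhds
    · intro t ht
      have key := hdsc w hw x hx t ⟨le_of_lt ht.1, ht.2⟩
      have heq : x + t • (w - x) = t • w + (1 - t) • x := by module
      rw [div_le_iff₀ ht.1]
      simp only [zero_smul, add_zero, heq]
      rw [← hK] at key
      ring_nf at key ⊢
      linarith
  -- optimality condition
  have hopt : (0:ℝ) ≤ ⟪d' z1 - d' z + g, u - z1⟫ := by
    set a := g - d' z with ha
    have hφ1 := aux_line_deriv z1 (u - z1) (hd z1)
    have hφ2 : HasDerivAt (fun t : ℝ => ⟪a, z1 + t • (u - z1)⟫) ⟪a, u - z1⟫ 0 := by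
      have : HasDerivAt (fun t : ℝ => ⟪a, z1⟫ + t * ⟪a, u - z1⟫) ⟪a, u - z1⟫ 0 := by
        simpa using ((hasDerivAt_id (0:ℝ)).mul_const ⟪a, u - z1⟫).const_add ⟪a, z1⟫
      refine this.congr_of_eventuallyEq (Filter.Eventually.of_forall fun t => ?_)
      simp only [inner_add_right, real_inner_smul_right]
    have hφ := (hφ1.add hφ2).neg
    have hneg : -(⟪d' z1, u - z1⟫ + ⟪a, u - z1⟫) ≤ 0 := by
      refine aux_slope_le hφ (ψ := fun _ => (0:ℝ)) tendsto_const_nhds ?_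
      intro t ht
      apply div_nonpos_of_nonpos_of_nonneg _ (le_of_lt ht.1)
      have hmem : z1 + t • (u - z1) ∈ Z := by
        have : z1 + t • (u - z1) = t • u + (1 - t) • z1 := by module
        rw [this]
        exact hZconvex hu hz1Z (le_of_lt ht.1) (by linarith [ht.2]) (by ring)
      have := hz1 _ hmem
      rw [hV, hV] at this
      simp only [Pi.neg_apply, Pi.add_apply, zero_smul, add_zero, ha, inner_sub_left, inner_sub_right, inner_add_right,
        real_inner_smul_right] at *
      linarith
    have : ⟪d' z1 - d' z + g, u - z1⟫ = ⟪d' z1, u - z1⟫ + ⟪a, u - z1⟫ := by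
      rw [ha]; simp only [inner_sub_left, inner_add_left]; ring
    linarith [this ▸ (neg_nonpos.mp hneg)]
  -- Hölder
  have holder : ⟪g, z - z1⟫ ≤ lrNorm q g * lrNorm p (z - z1) := by
    have hq1 : (1:ℝ)/q ≠ 0 := by positivity
    have hconj : Real.HolderConjugate q p := Real.holderConjugate_iff.mpr ⟨by linarith, by
      rw [← one_div, ← one_div]; linarith⟩
    have := Real.inner_le_Lp_mul_Lq (Finset.univ) (fun i => g i) (fun i => (z - z1) i) hconj
    simpa [lrNorm, PiLp.inner_apply, RCLike.inner_apply, mul_comm] using this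
  -- symmetry of lrNorm
  have hsym : lrNorm p (z - z1) = lrNorm p (z1 - z) := by
    unfold lrNorm
    congr 1
    refine Finset.sum_congr rfl fun i _ => ?_
    rw [show (z - z1) i = -((z1 - z) i) by simp, abs_neg]
  -- three point identity
  have h3 : V z u - V z1 u - V z z1 = ⟪d' z1 - d' z, u - z1⟫ := by
    simp only [hV, inner_sub_left, inner_sub_right]
    ring
  have hVzz1 : 1/2 * lrNorm p (z1 - z) ^ 2 ≤ V z z1 := by
    have := hlow z1 hz1Z z hz
    rw [hV]; linarith
  have young : lrNorm q g * lrNorm p (z - z1) ≤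
      1/2 * lrNorm q g ^ 2 + 1/2 * lrNorm p (z - z1) ^ 2 := by
    nlinarith [sq_nonneg (lrNorm q g - lrNorm p (z - z1))]
  have hsplit : ⟪g, z - u⟫ = ⟪g, z - z1⟫ + ⟪g, z1 - u⟫ := by
    rw [show z - u = (z - z1) + (z1 - u) by abel, inner_add_right]
  have hg1 : ⟪g, z1 - u⟫ = -⟪g, u - z1⟫ := by
    rw [show z1 - u = -(u - z1) by abel, inner_neg_right]
  have hoptsplit : ⟪d' z1 - d' z + g, u - z1⟫ = ⟪d' z1 - d' z, u - z1⟫ + ⟪g, u - z1⟫ := by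
    rw [inner_add_left]
  rw [hsplit, hg1]
  rw [hoptsplit] at hopt
  rw [hsym] at holder young
  linarith [h3, hVzz1, holder, young]
end
end

section
/- Let z ∈ Z, let g, g_{1/2} ∈ ℝ^n, and set z_{1/2} = prox_z(g) and z_1 = prox_z(g_{1/2}). Then for all u ∈ Z: ⟨g_{1/2}, z_{1/2} − u⟩ ≤ V(z, u) − V(z_1, u) + (1/2)‖g − g_{1/2}‖_q² − V(z, z_{1/2}). -/
open MeasureTheory Real Filter Set
open scoped RealInnerProductSpace Topology

noncomputable section

lemma hasDerivAt_line {n : ℕ} (d : EuclideanSpace ℝ (Fin n) → ℝ)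
    (d' : EuclideanSpace ℝ (Fin n) → EuclideanSpace ℝ (Fin n))
    (hd : ∀ x, HasGradientAt d (d' x) x) (w h : EuclideanSpace ℝ (Fin n)) :
    HasDerivAt (fun t : ℝ => d (w + t • h)) ⟪d' w, h⟫ 0 := by
  have hline : HasDerivAt (fun t : ℝ => w + t • h) h 0 := by
    simpa using ((hasDerivAt_id (0:ℝ)).smul_const h).const_add w
  have h0 : w + (0:ℝ) • h = w := by simp
  have hf := (hd w).hasFDerivAt
  rw [show w = (fun t : ℝ => w + t • h) 0 by simp] at hf
  have := hf.comp_hasDerivAt (0:ℝ) hline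
  simpa [Function.comp_def, InnerProductSpace.toDual_apply_apply] using this

/-- Strong-convexity lower bound: `⟪d' w, u - w⟫ ≤ d u - d w - N/2`. -/
lemma sc_grad_bound {n : ℕ} (d : EuclideanSpace ℝ (Fin n) → ℝ)
    (d' : EuclideanSpace ℝ (Fin n) → EuclideanSpace ℝ (Fin n))
    (hd : ∀ x, HasGradientAt d (d' x) x) (w u : EuclideanSpace ℝ (Fin n)) (N : ℝ)
    (hyp : ∀ t : ℝ, t ∈ Set.Icc (0:ℝ) 1 →
      d (t • u + (1 - t) • w) ≤ t * d u + (1 - t) * d w - t * (1 - t) / 2 * N) :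
    ⟪d' w, u - w⟫ ≤ d u - d w - N / 2 := by
  set h := u - w with hh
  have hcomb : ∀ t : ℝ, t • u + (1 - t) • w = w + t • h := by
    intro t; rw [hh]; module
  have hslope : ∀ t ∈ Set.Ioc (0:ℝ) 1,
      slope (fun t : ℝ => d (w + t • h)) 0 t ≤ d u - d w - (1 - t) / 2 * N := by
    intro t ht
    have := hyp t ⟨le_of_lt ht.1, ht.2⟩
    rw [hcomb] at this
    have h0 : w + (0:ℝ) • h = w := by simp
    rw [slope_def_field]
    simp only [h0, sub_zero]
    rw [div_le_iff₀ ht.1]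
    nlinarith [this]
  have hd0 := hasDerivAt_line d d' hd w h
  rw [hasDerivAt_iff_tendsto_slope] at hd0
  have hd0' : Tendsto (slope (fun t : ℝ => d (w + t • h)) 0) (𝓝[>] (0:ℝ)) (𝓝 ⟪d' w, h⟫) :=
    hd0.mono_left (nhdsWithin_mono _ fun x hx => ne_of_gt hx)
  have hrhs : Tendsto (fun t : ℝ => d u - d w - (1 - t) / 2 * N) (𝓝[>] (0:ℝ))
      (𝓝 (d u - d w - N / 2)) := by
    have : ContinuousAt (fun t : ℝ => d u - d w - (1 - t) / 2 * N) 0 := by fun_prop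
    have h2 := this.tendsto.mono_left (nhdsWithin_le_nhds (s := Set.Ioi (0:ℝ)))
    convert h2 using 2
    ring
  exact le_of_tendsto_of_tendsto hd0' hrhs
    (eventually_of_mem (Ioc_mem_nhdsGT one_pos) hslope)

/-- First-order optimality condition from value-minimality of a Bregman prox step. -/
lemma prox_vi {n : ℕ} (Z : Set (EuclideanSpace ℝ (Fin n))) (hZconvex : Convex ℝ Z)
    (d : EuclideanSpace ℝ (Fin n) → ℝ)
    (d' : EuclideanSpace ℝ (Fin n) → EuclideanSpace ℝ (Fin n))
    (hd : ∀ x, HasGradientAt d (d' x) x)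
    (V : EuclideanSpace ℝ (Fin n) → EuclideanSpace ℝ (Fin n) → ℝ)
    (hV : ∀ z w, V z w = d w - d z - ⟪d' z, w - z⟫)
    (z : EuclideanSpace ℝ (Fin n)) (g : EuclideanSpace ℝ (Fin n))
    (w : EuclideanSpace ℝ (Fin n)) (hwZ : w ∈ Z)
    (hmin : ∀ u ∈ Z, V z w + ⟪g, w⟫ ≤ V z u + ⟪g, u⟫)
    (u : EuclideanSpace ℝ (Fin n)) (huZ : u ∈ Z) :
    0 ≤ ⟪d' w - d' z + g, u - w⟫ := by
  set h := u - w with hh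
  set c : ℝ := ⟪g, h⟫ - ⟪d' z, h⟫ with hc
  have hcomb : ∀ t : ℝ, w + t • h = t • u + (1 - t) • w := by
    intro t; rw [hh]; module
  -- ψ t = F(w + t h) - const
  have hψ : HasDerivAt (fun t : ℝ => d (w + t • h) + t * c) (⟪d' w, h⟫ + c) 0 := by
    exact (hasDerivAt_line d d' hd w h).add (hasDerivAt_mul_const c)
  have hF : ∀ t ∈ Set.Ioc (0:ℝ) 1,
      0 ≤ slope (fun t : ℝ => d (w + t • h) + t * c) 0 t := by
    intro t ht
    have hmem : w + t • h ∈ Z := by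
      rw [hcomb]
      exact hZconvex huZ hwZ (le_of_lt ht.1) (by linarith [ht.2]) (by ring)
    have hle := hmin _ hmem
    rw [hV, hV] at hle
    have hexp : w + t • h - z = (w - z) + t • h := by module
    rw [hexp, inner_add_right, real_inner_smul_right] at hle
    have hg : (⟪g, w + t • h⟫ : ℝ) = ⟪g, w⟫ + t * ⟪g, h⟫ := by
      rw [inner_add_right, real_inner_smul_right]
    rw [hg] at hle
    rw [slope_def_field]
    simp only [sub_zero, zero_mul, add_zero]
    have h0 : w + (0:ℝ) • h = w := by simp
    rw [h0]
    apply div_nonneg _ (le_of_lt ht.1)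
    rw [hc]; nlinarith [hle]
  rw [hasDerivAt_iff_tendsto_slope] at hψ
  have hψ' : Tendsto (slope (fun t : ℝ => d (w + t • h) + t * c) 0) (𝓝[>] (0:ℝ))
      (𝓝 (⟪d' w, h⟫ + c)) := hψ.mono_left (nhdsWithin_mono _ fun x hx => ne_of_gt hx)
  have key : 0 ≤ ⟪d' w, h⟫ + c :=
    ge_of_tendsto hψ' (eventually_of_mem (Ioc_mem_nhdsGT one_pos) hF)
  have : (⟪d' w - d' z + g, u - w⟫ : ℝ) = ⟪d' w, h⟫ + c := by
    rw [hc, hh]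
    rw [inner_add_left, inner_sub_left]
    ring
  linarith [key, this.ge, this.le]

/-- Let `Z ⊆ ℝ^n` be closed convex, `p ∈ [1,2]`, `q ∈ [2,∞)` with
`1/p + 1/q = 1`.  Let `d : ℝ^n → ℝ` be differentiable and 1-strongly convex w.r.t. `‖·‖_p`
on `Z`, with Bregman divergence `V(z,w) = d(w) − d(z) − ⟨∇d(z), w − z⟩`, and for `z ∈ Z`,
`g ∈ ℝ^n` let `prox_z(g)` be a minimizer over `u ∈ Z` of `V(z,u) + ⟨g,u⟩`.
If `z_{1/2} = prox_z(g)` and `z₁ = prox_z(g_{1/2})`, then for all `u ∈ Z`: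
`⟨g_{1/2}, z_{1/2} − u⟩ ≤ V(z,u) − V(z₁,u) + (1/2)‖g − g_{1/2}‖_q² − V(z, z_{1/2})`. -/
theorem prox_extragradient_lemma {n : ℕ} (hn : 1 ≤ n) (Z : Set (EuclideanSpace ℝ (Fin n)))
    (hZclosed : IsClosed Z) (hZconvex : Convex ℝ Z)
    (p q : ℝ) (hp : 1 ≤ p) (hp2 : p ≤ 2) (hq : 2 ≤ q) (hpq : 1 / p + 1 / q = 1)
    (d : EuclideanSpace ℝ (Fin n) → ℝ) (d' : EuclideanSpace ℝ (Fin n) → EuclideanSpace ℝ (Fin n))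
    (hd : ∀ x, HasGradientAt d (d' x) x)
    (hdsc : ∀ z1 ∈ Z, ∀ z2 ∈ Z, ∀ t : ℝ, t ∈ Set.Icc (0 : ℝ) 1 →
      d (t • z1 + (1 - t) • z2) ≤
        t * d z1 + (1 - t) * d z2 - t * (1 - t) / 2 * lrNorm p (z1 - z2) ^ 2)
    (V : EuclideanSpace ℝ (Fin n) → EuclideanSpace ℝ (Fin n) → ℝ)
    (hV : ∀ z w, V z w = d w - d z - ⟪d' z, w - z⟫)
    (z : EuclideanSpace ℝ (Fin n)) (hz : z ∈ Z) (g ghalf : EuclideanSpace ℝ (Fin n))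
    (zhalf : EuclideanSpace ℝ (Fin n)) (hzhalfZ : zhalf ∈ Z)
    (hzhalf : ∀ u ∈ Z, V z zhalf + ⟪g, zhalf⟫ ≤ V z u + ⟪g, u⟫)
    (z1 : EuclideanSpace ℝ (Fin n)) (hz1Z : z1 ∈ Z)
    (hz1 : ∀ u ∈ Z, V z z1 + ⟪ghalf, z1⟫ ≤ V z u + ⟪ghalf, u⟫) :
    ∀ u ∈ Z, ⟪ghalf, zhalf - u⟫ ≤
      V z u - V z1 u + 1 / 2 * lrNorm q (g - ghalf) ^ 2 - V z zhalf := by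
  intro u huZ
  set A : ℝ := lrNorm q (g - ghalf) with hA
  set B : ℝ := lrNorm p (z1 - zhalf) with hB
  -- conjugate exponents
  have hq0 : (0:ℝ) < q := by linarith
  have hp0 : (0:ℝ) < p := by linarith
  have hp1 : 1 < p := by
    have h1 : (0:ℝ) < 1/q := by positivity
    have h2 : 1/p < 1 := by linarith
    rwa [div_lt_one hp0] at h2
  have hconj : Real.HolderConjugate p q :=
    Real.holderConjugate_iff.mpr ⟨hp1, by rw [← one_div p, ← one_div q]; exact hpq⟩
  -- variational inequalities
  have vi1 := prox_vi Z hZconvex d d' hd V hV z ghalf z1 hz1Z hz1 u huZ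
  have vi2 := prox_vi Z hZconvex d d' hd V hV z g zhalf hzhalfZ hzhalf z1 hz1Z
  -- strong convexity bound
  have hsc : ⟪d' zhalf, z1 - zhalf⟫ ≤ d z1 - d zhalf - B ^ 2 / 2 :=
    sc_grad_bound d d' hd zhalf z1 (B ^ 2) (fun t ht => hdsc z1 hz1Z zhalf hzhalfZ t ht)
  -- Hölder
  have hH : ⟪ghalf - g, zhalf - z1⟫ ≤ A * B := by
    have := Real.inner_le_Lp_mul_Lq (s := Finset.univ)
      (fun i => ghalf i - g i) (fun i => zhalf i - z1 i) hconj.symm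
    have hinner : (⟪ghalf - g, zhalf - z1⟫ : ℝ) =
        ∑ i, (ghalf i - g i) * (zhalf i - z1 i) := by
      simp [PiLp.inner_apply, PiLp.sub_apply, mul_comm]
    have heA : A = (∑ i, |ghalf i - g i| ^ q) ^ (1/q) := by
      rw [hA]; unfold lrNorm
      congr 1
      exact Finset.sum_congr rfl fun i _ => by
        rw [show (g - ghalf) i = g i - ghalf i from rfl, abs_sub_comm]
    have heB : B = (∑ i, |zhalf i - z1 i| ^ p) ^ (1/p) := by
      rw [hB]; unfold lrNorm
      congr 1
      exact Finset.sum_congr rfl fun i _ => by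
        rw [show (z1 - zhalf) i = z1 i - zhalf i from rfl, abs_sub_comm]
    rw [hinner, heA, heB]
    linarith [this]
  have hAB : A * B ≤ A ^ 2 / 2 + B ^ 2 / 2 := by nlinarith [sq_nonneg (A - B)]
  -- decomposition of the inner product
  have hdec : (⟪ghalf, zhalf - u⟫ : ℝ) =
      ⟪ghalf, u - z1⟫ * (-1) + ⟪g, z1 - zhalf⟫ * (-1) + ⟪ghalf - g, zhalf - z1⟫ := by
    simp only [inner_sub_left, inner_sub_right]
    ring
  -- expand everything and finish
  simp only [hV, inner_add_left, inner_sub_left, inner_add_right, inner_sub_right]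
    at vi1 vi2 hsc hdec hH ⊢
  linarith [vi1, vi2, hsc, hH, hAB, hdec]
end
end

section
/- Let f : ℝ^{n_x} × ℝ^{n_y} → ℝ be differentiable and convex–concave on Z = X × Y (f(·,y) convex on X for each y ∈ Y and f(x,·) concave on Y for each x ∈ X), with X, Y compact convex, and let F(x,y) = (∇_x f(x,y), −∇_y f(x,y)). For any points w_0, …, w_N ∈ Z, the average z̄ = (x̄, ȳ) = (1/(N+1)) Σ_{k=0}^{N} w_k satisfies ε_sad(z̄) ≤ max_{u ∈ Z} (1/(N+1)) Σ_{k=0}^{N} ⟨F(w_k), w_k − u⟩, where ε_sad(x̄,ȳ) = max_{y'∈Y} f(x̄,y') − min_{x'∈X} f(x',ȳ). -/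
open MeasureTheory Real Finset
open scoped RealInnerProductSpace

noncomputable section

/-- The saddle-point gap `ε_sad(x̄,ȳ) = max_{y'∈Y} f(x̄,y') − min_{x'∈X} f(x',ȳ)`. -/
def epsSad {nx ny : ℕ} (f : Zsp nx ny → ℝ) (X : Set (Esp nx)) (Y : Set (Esp ny))
    (z : Zsp nx ny) : ℝ :=
  sSup ((fun y' => f (mkZ z.fst y')) '' Y) - sInf ((fun x' => f (mkZ x' z.snd)) '' X)

/-- First-order condition for a differentiable convex function. -/
lemma gradient_inner_le_sub {n : ℕ} {s : Set (Esp n)} {g : Esp n → ℝ}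
    (hg : Differentiable ℝ g) (hc : ConvexOn ℝ s g) {a b : Esp n}
    (ha : a ∈ s) (hb : b ∈ s) : ⟪gradient g a, b - a⟫ ≤ g b - g a := by
  have hline : (fun t : ℝ => (AffineMap.lineMap a b t : Esp n)) = fun t => t • (b - a) + a := by
    funext t; simp [AffineMap.lineMap_apply]
  have hφconv : ConvexOn ℝ (Set.Icc (0:ℝ) 1) (fun t => g (AffineMap.lineMap a b t)) := by
    refine (hc.comp_affineMap (AffineMap.lineMap a b)).subset ?_ (convex_Icc 0 1)
    exact fun t ht => hc.1.lineMap_mem ha hb ht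
  have hder : HasDerivAt (fun t : ℝ => g (AffineMap.lineMap a b t)) ⟪gradient g a, b - a⟫ (0:ℝ) := by
    have h1 : HasDerivAt (fun t : ℝ => (AffineMap.lineMap a b t : Esp n)) (b - a) 0 := by
      rw [hline]
      simpa using ((hasDerivAt_id (0:ℝ)).smul_const (b - a)).add_const a
    have h2 : HasFDerivAt g (InnerProductSpace.toDual ℝ (Esp n) (gradient g a)) a :=
      hasGradientAt_iff_hasFDerivAt.mp (hg a).hasGradientAt
    have h0 : (AffineMap.lineMap a b (0:ℝ) : Esp n) = a := by simp
    rw [← h0] at h2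
    have h3 := h2.comp_hasDerivAt 0 h1
    simpa only [Function.comp_def, InnerProductSpace.toDual_apply_apply, AffineMap.lineMap_apply_zero] using h3
  have hslope := hφconv.le_slope_of_hasDerivAt (Set.left_mem_Icc.mpr zero_le_one)
      (Set.right_mem_Icc.mpr zero_le_one) zero_lt_one hder
  have heq : slope (fun t : ℝ => g (AffineMap.lineMap a b t)) (0:ℝ) (1:ℝ) = g b - g a := by
    simp [slope_def_field]
  rw [heq] at hslope
  exact hslope

lemma gradient_neg' {n : ℕ} (h : Esp n → ℝ) (y : Esp n) :
    gradient (fun t => -(h t)) y = -(gradient h y) := by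
  simp [gradient, fderiv_neg, map_neg]

/-- For a differentiable convex–concave `f` on `Z = X × Y` (`X`, `Y`
nonempty compact convex) and any points `w_0, …, w_N ∈ Z`, the average
`z̄ = (1/(N+1)) ∑ w_k` satisfies
`ε_sad(z̄) ≤ max_{u ∈ Z} (1/(N+1)) ∑_k ⟨F(w_k), w_k − u⟩`. -/
theorem epsSad_le_sup_avg_inner {nx ny : ℕ} (hnx : 1 ≤ nx) (hny : 1 ≤ ny)
    (X : Set (Esp nx)) (Y : Set (Esp ny))
    (hXne : X.Nonempty) (hYne : Y.Nonempty)
    (hXcp : IsCompact X) (hYcp : IsCompact Y) (hX : Convex ℝ X) (hY : Convex ℝ Y)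
    (f : Zsp nx ny → ℝ) (hf : Differentiable ℝ f)
    (hconv : ∀ y ∈ Y, ConvexOn ℝ X (fun x => f (mkZ x y)))
    (hconc : ∀ x ∈ X, ConcaveOn ℝ Y (fun y => f (mkZ x y)))
    (N : ℕ) (w : ℕ → Zsp nx ny)
    (hw : ∀ k ≤ N, (w k).fst ∈ X ∧ (w k).snd ∈ Y) :
    epsSad f X Y ((N + 1 : ℝ)⁻¹ • ∑ k ∈ range (N + 1), w k) ≤
      sSup ((fun u => (N + 1 : ℝ)⁻¹ * ∑ k ∈ range (N + 1), ⟪sadOp f (w k), w k - u⟫) ''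
        {z : Zsp nx ny | z.fst ∈ X ∧ z.snd ∈ Y}) := by
  classical
  obtain ⟨x0, hx0⟩ := hXne
  obtain ⟨y0, hy0⟩ := hYne
  set c : ℝ := (N + 1 : ℝ)⁻¹ with hcdef
  have hNpos : (0:ℝ) < (N:ℝ) + 1 := by positivity
  have hcpos : 0 < c := by rw [hcdef]; positivity
  set zb : Zsp nx ny := c • ∑ k ∈ range (N + 1), w k with hzb
  have hmem' : ∀ k ∈ range (N + 1), (w k).fst ∈ X ∧ (w k).snd ∈ Y :=
    fun k hk => hw k (Nat.lt_succ_iff.mp (Finset.mem_range.mp hk))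
  have hfstsum : ∀ t : Finset ℕ, (∑ k ∈ t, w k).fst = ∑ k ∈ t, (w k).fst := by
    intro t
    induction t using Finset.cons_induction with
    | empty => rfl
    | cons i t hi ih => rw [Finset.sum_cons, Finset.sum_cons, WithLp.add_fst, ih]
  have hsndsum : ∀ t : Finset ℕ, (∑ k ∈ t, w k).snd = ∑ k ∈ t, (w k).snd := by
    intro t
    induction t using Finset.cons_induction with
    | empty => rfl
    | cons i t hi ih => rw [Finset.sum_cons, Finset.sum_cons, WithLp.add_snd, ih]
  have hzfst : zb.fst = ∑ k ∈ range (N + 1), c • (w k).fst := by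
    rw [hzb, WithLp.smul_fst, hfstsum, Finset.smul_sum]
  have hzsnd : zb.snd = ∑ k ∈ range (N + 1), c • (w k).snd := by
    rw [hzb, WithLp.smul_snd, hsndsum, Finset.smul_sum]
  have h₀ : ∀ k ∈ range (N + 1), (0:ℝ) ≤ c := fun _ _ => hcpos.le
  have h₁ : ∑ _k ∈ range (N + 1), c = 1 := by
    rw [Finset.sum_const, Finset.card_range, nsmul_eq_mul, hcdef]
    push_cast
    field_simp
  -- key pointwise inequality
  have key : ∀ x' ∈ X, ∀ y' ∈ Y, ∀ k ∈ range (N + 1),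
      f (mkZ (w k).fst y') - f (mkZ x' (w k).snd) ≤ ⟪sadOp f (w k), w k - mkZ x' y'⟫ := by
    intro x' hx' y' hy' k hk
    obtain ⟨hkX, hkY⟩ := hmem' k hk
    have hmkx : Differentiable ℝ (fun x : Esp nx => mkZ x (w k).snd) := by
      have : (fun x : Esp nx => mkZ x (w k).snd) =
          (⇑(WithLp.prodContinuousLinearEquiv 2 ℝ (Esp nx) (Esp ny)).symm) ∘
            (fun x => (x, (w k).snd)) := rfl
      rw [this]
      exact (ContinuousLinearEquiv.differentiable _).comp
        (differentiable_id.prodMk (differentiable_const _))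
    have hmky : Differentiable ℝ (fun y : Esp ny => mkZ (w k).fst y) := by
      have : (fun y : Esp ny => mkZ (w k).fst y) =
          (⇑(WithLp.prodContinuousLinearEquiv 2 ℝ (Esp nx) (Esp ny)).symm) ∘
            (fun y => ((w k).fst, y)) := rfl
      rw [this]
      exact (ContinuousLinearEquiv.differentiable _).comp
        ((differentiable_const _).prodMk differentiable_id)
    have hgx : Differentiable ℝ (fun x => f (mkZ x (w k).snd)) := hf.comp hmkx
    have h1 := gradient_inner_le_sub hgx (hconv _ hkY) hkX hx'
    have hgy : Differentiable ℝ (fun y => -(f (mkZ (w k).fst y))) := (hf.comp hmky).neg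
    have h2 := gradient_inner_le_sub hgy ((hconc _ hkX).neg) hkY hy'
    rw [gradient_neg' (fun y => f (mkZ (w k).fst y)) (w k).snd] at h2
    beta_reduce at h1 h2
    have hip : ⟪sadOp f (w k), w k - mkZ x' y'⟫ =
        ⟪gradient (fun x => f (mkZ x (w k).snd)) (w k).fst, (w k).fst - x'⟫ +
          ⟪-(gradient (fun y => f (mkZ (w k).fst y)) (w k).snd), (w k).snd - y'⟫ := rfl
    have e1 : ⟪gradient (fun x => f (mkZ x (w k).snd)) (w k).fst, (w k).fst - x'⟫ =
        -⟪gradient (fun x => f (mkZ x (w k).snd)) (w k).fst, x' - (w k).fst⟫ := by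
      rw [← neg_sub, inner_neg_right]
    have e2 : ⟪-(gradient (fun y => f (mkZ (w k).fst y)) (w k).snd), (w k).snd - y'⟫ =
        -⟪-(gradient (fun y => f (mkZ (w k).fst y)) (w k).snd), y' - (w k).snd⟫ := by
      rw [← neg_sub, inner_neg_right]
    rw [hip, e1, e2]
    have hmk : mkZ (w k).fst (w k).snd = w k := rfl
    rw [hmk] at h1 h2
    linarith
  -- compactness and boundedness
  set Zset : Set (Zsp nx ny) := {z : Zsp nx ny | z.fst ∈ X ∧ z.snd ∈ Y} with hZset
  have hZeq : Zset = (⇑(WithLp.prodContinuousLinearEquiv 2 ℝ (Esp nx) (Esp ny)).symm) ''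
      (X ×ˢ Y) := by
    ext z
    constructor
    · rintro ⟨h1, h2⟩
      exact ⟨(z.fst, z.snd), ⟨h1, h2⟩, rfl⟩
    · rintro ⟨⟨a, b⟩, ⟨ha, hb⟩, rfl⟩
      exact ⟨ha, hb⟩
  have hZcp : IsCompact Zset := by
    rw [hZeq]
    exact (hXcp.prod hYcp).image (ContinuousLinearEquiv.continuous _)
  have hcont : Continuous (fun u : Zsp nx ny =>
      c * ∑ k ∈ range (N + 1), ⟪sadOp f (w k), w k - u⟫) :=
    continuous_const.mul (continuous_finset_sum _ fun k _ =>
      Continuous.inner continuous_const (continuous_const.sub continuous_id))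
  have hbdd : BddAbove ((fun u => c * ∑ k ∈ range (N + 1), ⟪sadOp f (w k), w k - u⟫) '' Zset) :=
    (hZcp.bddAbove_image hcont.continuousOn)
  -- main averaged bound
  have main : ∀ x' ∈ X, ∀ y' ∈ Y, f (mkZ zb.fst y') - f (mkZ x' zb.snd) ≤
      sSup ((fun u => c * ∑ k ∈ range (N + 1), ⟪sadOp f (w k), w k - u⟫) '' Zset) := by
    intro x' hx' y' hy'
    have hJ1 : f (mkZ zb.fst y') ≤ ∑ k ∈ range (N + 1), c * f (mkZ (w k).fst y') := by
      have := (hconv y' hy').map_sum_le h₀ h₁ (fun k hk => (hmem' k hk).1)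
      rw [hzfst]
      simpa using this
    have hJ2 : ∑ k ∈ range (N + 1), c * f (mkZ x' (w k).snd) ≤ f (mkZ x' zb.snd) := by
      have := (hconc x' hx').le_map_sum h₀ h₁ (fun k hk => (hmem' k hk).2)
      rw [hzsnd]
      simpa using this
    have hK : ∑ k ∈ range (N + 1), c * (f (mkZ (w k).fst y') - f (mkZ x' (w k).snd)) ≤
        ∑ k ∈ range (N + 1), c * ⟪sadOp f (w k), w k - mkZ x' y'⟫ :=
      Finset.sum_le_sum fun k hk =>
        mul_le_mul_of_nonneg_left (key x' hx' y' hy' k hk) hcpos.le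
    have hsplit : ∑ k ∈ range (N + 1), c * (f (mkZ (w k).fst y') - f (mkZ x' (w k).snd)) =
        (∑ k ∈ range (N + 1), c * f (mkZ (w k).fst y')) -
          ∑ k ∈ range (N + 1), c * f (mkZ x' (w k).snd) := by
      rw [← Finset.sum_sub_distrib]
      exact Finset.sum_congr rfl fun k _ => mul_sub c _ _
    have hmemZ : mkZ x' y' ∈ Zset := ⟨hx', hy'⟩
    have hle : c * ∑ k ∈ range (N + 1), ⟪sadOp f (w k), w k - mkZ x' y'⟫ ≤
        sSup ((fun u => c * ∑ k ∈ range (N + 1), ⟪sadOp f (w k), w k - u⟫) '' Zset) :=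
      le_csSup hbdd ⟨mkZ x' y', hmemZ, rfl⟩
    rw [Finset.mul_sum] at hle
    linarith
  -- conclude
  unfold epsSad
  rw [sub_le_iff_le_add]
  apply csSup_le (Set.Nonempty.image _ ⟨y0, hy0⟩)
  rintro a ⟨y', hy', rfl⟩
  have hinf : f (mkZ zb.fst y') -
      sSup ((fun u => c * ∑ k ∈ range (N + 1), ⟪sadOp f (w k), w k - u⟫) '' Zset) ≤
      sInf ((fun x' => f (mkZ x' zb.snd)) '' X) := by
    apply le_csInf (Set.Nonempty.image _ ⟨x0, hx0⟩)
    rintro b ⟨x', hx', rfl⟩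
    linarith [main x' hx' y' hy']
  linarith
end
end
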